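/- Let R = k[a1, a2] be a polynomial ring over a field, let p ≥ 5 be odd, x1 = a1^p, x2 = a2^p, y = a1^2*a2^(p-2), I = (x1, x2, y), J = (x1, x2). Then J is a reduction of I with reduction number exactly p-1: I^p = J*I^(p-1) and y^(p-1) ∉ J*I^(p-2). -/

import Mathlib

open MvPolynomial

private lemma ideal_add_pow_le {R : Type*} [CommRing R] (A B : Ideal R) :
    ∀ n : ℕ, (A + B) ^ (n + 1) ≤ A * (A + B) ^ n + B ^ (n + 1) := by
  intro n
  induction n with
  | zero => simp
  | succ n ih =>
    have hB : B ^ (n + 1) ≤ (A + B) ^ (n + 1) := by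
      apply Ideal.pow_right_mono
      rw [Ideal.add_eq_sup]; exact le_sup_right
    calc (A + B) ^ (n + 1 + 1) = (A + B) * (A + B) ^ (n + 1) := pow_succ' _ _
      _ ≤ (A + B) * (A * (A + B) ^ n + B ^ (n + 1)) := Ideal.mul_mono_right ih
      _ = A * (A + B) ^ (n + 1) + (A * B ^ (n + 1) + B ^ (n + 1 + 1)) := by ring
      _ ≤ A * (A + B) ^ (n + 1) + (A * (A + B) ^ (n + 1) + B ^ (n + 1 + 1)) :=
          add_le_add le_rfl (add_le_add (Ideal.mul_mono_right hB) le_rfl)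
      _ = A * (A + B) ^ (n + 1) + B ^ (n + 1 + 1) := by
          rw [Ideal.add_eq_sup, Ideal.add_eq_sup, Ideal.add_eq_sup, ← sup_assoc, sup_idem]

private lemma pow_supp {k : Type*} [Field k] (p : ℕ) (hp : 5 ≤ p) (n : ℕ) :
    ∀ f : MvPolynomial (Fin 2) k,
      f ∈ (Ideal.span {(X 0 : MvPolynomial (Fin 2) k) ^ p, X 1 ^ p,
          X 0 ^ 2 * X 1 ^ (p - 2)}) ^ n →
      ∀ d ∈ f.support, ∃ a b c e0 e1 : ℕ, a + b + c = n ∧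
        d 0 = p * a + 2 * c + e0 ∧ d 1 = p * b + c * (p - 2) + e1 := by
  induction n with
  | zero =>
    intro f _ d _
    exact ⟨0, 0, 0, d 0, d 1, by omega, by omega, by omega⟩
  | succ n ih =>
    intro f hf
    rw [pow_succ] at hf
    refine Submodule.mul_induction_on hf ?_ ?_
    · intro m hm g hg
      have hmP := ih m hm
      induction hg using Submodule.span_induction with
      | mem x hx =>
        intro d hd
        obtain ⟨d₁, hd₁, d₂, hd₂, heq⟩ := Finset.mem_add.mp (support_mul m x hd)
        subst heq
        obtain ⟨a, b, c, e0, e1, hsum, h0, h1⟩ := hmP d₁ hd₁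
        simp only [Set.mem_insert_iff, Set.mem_singleton_iff] at hx
        rcases hx with rfl | rfl | rfl
        · rw [support_X_pow, Finset.mem_singleton] at hd₂
          subst hd₂
          refine ⟨a + 1, b, c, e0, e1, by omega, ?_, ?_⟩ <;>
            rw [Finsupp.add_apply]
          · rw [Finsupp.single_eq_same, Nat.mul_succ]; linarith
          · rw [Finsupp.single_eq_of_ne' (by decide : (0 : Fin 2) ≠ 1)]; linarith
        · rw [support_X_pow, Finset.mem_singleton] at hd₂
          subst hd₂
          refine ⟨a, b + 1, c, e0, e1, by omega, ?_, ?_⟩ <;>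
            rw [Finsupp.add_apply]
          · rw [Finsupp.single_eq_of_ne' (by decide : (1 : Fin 2) ≠ 0)]; linarith
          · rw [Finsupp.single_eq_same, Nat.mul_succ]; linarith
        · have hysupp : ((X 0 : MvPolynomial (Fin 2) k) ^ 2 * X 1 ^ (p - 2)).support
              = {Finsupp.single 0 2 + Finsupp.single 1 (p - 2)} := by
            classical
            rw [X_pow_eq_monomial, X_pow_eq_monomial, monomial_mul, support_monomial]
            simp
          rw [hysupp, Finset.mem_singleton] at hd₂
          subst hd₂
          refine ⟨a, b, c + 1, e0, e1, by omega, ?_, ?_⟩ <;>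
            rw [Finsupp.add_apply, Finsupp.add_apply]
          · rw [Finsupp.single_eq_same,
              Finsupp.single_eq_of_ne' (by decide : (1 : Fin 2) ≠ 0), Nat.mul_succ]
            linarith
          · rw [Finsupp.single_eq_same,
              Finsupp.single_eq_of_ne' (by decide : (0 : Fin 2) ≠ 1), Nat.succ_mul]
            linarith
      | zero =>
        intro d hd
        rw [mul_zero] at hd
        simp at hd
      | add x y hx hy ihx ihy =>
        intro d hd
        rw [mul_add] at hd
        rcases Finset.mem_union.mp (support_add hd) with h | h
        exacts [ihx d h, ihy d h]
      | smul cc x hx ihx =>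
        intro d hd
        rw [smul_eq_mul, mul_left_comm] at hd
        obtain ⟨d₁, hd₁, d₂, hd₂, heq⟩ := Finset.mem_add.mp (support_mul cc (m * x) hd)
        subst heq
        obtain ⟨a, b, c, e0, e1, hsum, h0, h1⟩ := ihx d₂ hd₂
        exact ⟨a, b, c, e0 + d₁ 0, e1 + d₁ 1, hsum,
          by rw [Finsupp.add_apply]; linarith, by rw [Finsupp.add_apply]; linarith⟩
    · intro x y ihx ihy d hd
      rcases Finset.mem_union.mp (support_add hd) with h | h
      exacts [ihx d h, ihy d h]

private lemma final_supp {k : Type*} [Field k] (p : ℕ) (hp : 5 ≤ p) :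
    ∀ f : MvPolynomial (Fin 2) k,
      f ∈ Ideal.span {(X 0 : MvPolynomial (Fin 2) k) ^ p, X 1 ^ p} *
        (Ideal.span {(X 0 : MvPolynomial (Fin 2) k) ^ p, X 1 ^ p,
          X 0 ^ 2 * X 1 ^ (p - 2)}) ^ (p - 2) →
      ∀ d ∈ f.support, ∃ a b c e0 e1 : ℕ, 1 ≤ a + b ∧ a + b + c = p - 1 ∧
        d 0 = p * a + 2 * c + e0 ∧ d 1 = p * b + c * (p - 2) + e1 := by
  intro f hf
  refine Submodule.mul_induction_on hf ?_ ?_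
  · intro r hr s hs
    have hsP := pow_supp p hp (p - 2) s hs
    induction hr using Submodule.span_induction with
    | mem x hx =>
      intro d hd
      obtain ⟨d₁, hd₁, d₂, hd₂, heq⟩ := Finset.mem_add.mp (support_mul x s hd)
      subst heq
      obtain ⟨a, b, c, e0, e1, hsum, h0, h1⟩ := hsP d₂ hd₂
      simp only [Set.mem_insert_iff, Set.mem_singleton_iff] at hx
      rcases hx with rfl | rfl
      · rw [support_X_pow, Finset.mem_singleton] at hd₁
        subst hd₁
        refine ⟨a + 1, b, c, e0, e1, by omega, by omega, ?_, ?_⟩ <;>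
          rw [Finsupp.add_apply]
        · rw [Finsupp.single_eq_same, Nat.mul_succ]; linarith
        · rw [Finsupp.single_eq_of_ne' (by decide : (0 : Fin 2) ≠ 1)]; linarith
      · rw [support_X_pow, Finset.mem_singleton] at hd₁
        subst hd₁
        refine ⟨a, b + 1, c, e0, e1, by omega, by omega, ?_, ?_⟩ <;>
          rw [Finsupp.add_apply]
        · rw [Finsupp.single_eq_of_ne' (by decide : (1 : Fin 2) ≠ 0)]; linarith
        · rw [Finsupp.single_eq_same, Nat.mul_succ]; linarith
    | zero =>
      intro d hd
      rw [zero_mul] at hd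
      simp at hd
    | add x y hx hy ihx ihy =>
      intro d hd
      rw [add_mul] at hd
      rcases Finset.mem_union.mp (support_add hd) with h | h
      exacts [ihx d h, ihy d h]
    | smul cc x hx ihx =>
      intro d hd
      rw [smul_eq_mul, mul_assoc] at hd
      obtain ⟨d₁, hd₁, d₂, hd₂, heq⟩ := Finset.mem_add.mp (support_mul cc (x * s) hd)
      subst heq
      obtain ⟨a, b, c, e0, e1, hab, hsum, h0, h1⟩ := ihx d₂ hd₂
      exact ⟨a, b, c, e0 + d₁ 0, e1 + d₁ 1, hab, hsum,
        by rw [Finsupp.add_apply]; linarith, by rw [Finsupp.add_apply]; linarith⟩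
  · intro x y ihx ihy d hd
    rcases Finset.mem_union.mp (support_add hd) with h | h
    exacts [ihx d h, ihy d h]

/-- In `R = k[a1,a2]` with `p ≥ 5` odd, `x1 = a1^p`, `x2 = a2^p`,
`y = a1²*a2^(p-2)`, `I = (x1,x2,y)`, `J = (x1,x2)`: `J` is a reduction of `I` with
reduction number exactly `p-1`, i.e. `I^p = J*I^(p-1)` and `y^(p-1) ∉ J*I^(p-2)`. -/
theorem stmt_17 {k : Type*} [Field k] (p : ℕ) (hp : 5 ≤ p) (hodd : Odd p)
    (a1 a2 y : MvPolynomial (Fin 2) k) (ha1 : a1 = X 0) (ha2 : a2 = X 1)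
    (hy : y = a1 ^ 2 * a2 ^ (p - 2))
    (I J : Ideal (MvPolynomial (Fin 2) k))
    (hI : I = Ideal.span {a1 ^ p, a2 ^ p, y})
    (hJ : J = Ideal.span {a1 ^ p, a2 ^ p}) :
    I ^ p = J * I ^ (p - 1) ∧ y ^ (p - 1) ∉ J * I ^ (p - 2) := by
  subst ha1 ha2 hy hI hJ
  have hp1 : p - 1 + 1 = p := by omega
  have hJI : Ideal.span {(X 0 : MvPolynomial (Fin 2) k) ^ p, X 1 ^ p} ≤
      Ideal.span {(X 0 : MvPolynomial (Fin 2) k) ^ p, X 1 ^ p, X 0 ^ 2 * X 1 ^ (p - 2)} := by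
    apply Ideal.span_mono
    intro z hz
    simp only [Set.mem_insert_iff, Set.mem_singleton_iff] at hz ⊢
    tauto
  set I : Ideal (MvPolynomial (Fin 2) k) :=
    Ideal.span {(X 0 : MvPolynomial (Fin 2) k) ^ p, X 1 ^ p, X 0 ^ 2 * X 1 ^ (p - 2)} with hIdef
  set J : Ideal (MvPolynomial (Fin 2) k) :=
    Ideal.span {(X 0 : MvPolynomial (Fin 2) k) ^ p, X 1 ^ p} with hJdef
  have hx1I : (X 0 : MvPolynomial (Fin 2) k) ^ p ∈ I := Ideal.subset_span (by simp)
  have hx2I : (X 1 : MvPolynomial (Fin 2) k) ^ p ∈ I := Ideal.subset_span (by simp)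
  have hx1J : (X 0 : MvPolynomial (Fin 2) k) ^ p ∈ J := Ideal.subset_span (by simp)
  constructor
  · -- I^p = J * I^(p-1)
    have hIsplit : I = J + Ideal.span {(X 0 : MvPolynomial (Fin 2) k) ^ 2 * X 1 ^ (p - 2)} := by
      rw [hIdef, hJdef, Ideal.add_eq_sup, ← Ideal.span_union]
      congr 1
      ext z
      constructor <;>
        (intro h;
         simp only [Set.mem_insert_iff, Set.mem_singleton_iff, Set.mem_union] at h ⊢; tauto)
    have hyp_mem : ((X 0 : MvPolynomial (Fin 2) k) ^ 2 * X 1 ^ (p - 2)) ^ p ∈ J * I ^ (p - 1) := by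
      have hyeq : ((X 0 : MvPolynomial (Fin 2) k) ^ 2 * X 1 ^ (p - 2)) ^ p
          = X 0 ^ p * (X 0 ^ p * (X 1 ^ p) ^ (p - 2)) := by
        ring
      rw [hyeq]
      refine Ideal.mul_mem_mul hx1J ?_
      have h21 : p - 2 + 1 = p - 1 := by omega
      rw [← h21, pow_succ']
      exact Ideal.mul_mem_mul hx1I (Ideal.pow_mem_pow hx2I _)
    have hle2 : I ^ p ≤ J * I ^ (p - 1) := by
      calc I ^ p = (J + Ideal.span {(X 0 : MvPolynomial (Fin 2) k) ^ 2 * X 1 ^ (p - 2)}) ^ (p - 1 + 1) := by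
            rw [hp1, ← hIsplit]
        _ ≤ J * (J + Ideal.span {(X 0 : MvPolynomial (Fin 2) k) ^ 2 * X 1 ^ (p - 2)}) ^ (p - 1)
            + Ideal.span {(X 0 : MvPolynomial (Fin 2) k) ^ 2 * X 1 ^ (p - 2)} ^ (p - 1 + 1) :=
            ideal_add_pow_le _ _ _
        _ = J * I ^ (p - 1)
            + Ideal.span {((X 0 : MvPolynomial (Fin 2) k) ^ 2 * X 1 ^ (p - 2)) ^ p} := by
            rw [← hIsplit, Ideal.span_singleton_pow, hp1]
        _ ≤ J * I ^ (p - 1) := by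
            rw [Ideal.add_eq_sup]
            exact sup_le le_rfl (Ideal.span_le.mpr (Set.singleton_subset_iff.mpr hyp_mem))
    have hle1 : J * I ^ (p - 1) ≤ I ^ p := by
      calc J * I ^ (p - 1) ≤ I * I ^ (p - 1) := Ideal.mul_mono_left hJI
        _ = I ^ p := by rw [← pow_succ', hp1]
    exact le_antisymm hle2 hle1
  · -- y^(p-1) ∉ J * I^(p-2)
    intro hmem
    have hfeq : ((X 0 : MvPolynomial (Fin 2) k) ^ 2 * X 1 ^ (p - 2)) ^ (p - 1)
        = X 0 ^ (2 * (p - 1)) * X 1 ^ ((p - 2) * (p - 1)) := by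
      rw [mul_pow, ← pow_mul, ← pow_mul]
    have hd : (Finsupp.single (0 : Fin 2) (2 * (p - 1))
          + Finsupp.single (1 : Fin 2) ((p - 2) * (p - 1)))
        ∈ (((X 0 : MvPolynomial (Fin 2) k) ^ 2 * X 1 ^ (p - 2)) ^ (p - 1)).support := by
      classical
      rw [hfeq, X_pow_eq_monomial, X_pow_eq_monomial, monomial_mul, support_monomial]
      simp
    obtain ⟨a, b, c, e0, e1, hab, hsum, h0, h1⟩ := final_supp p hp _ hmem _ hd
    rw [Finsupp.add_apply, Finsupp.single_eq_same,
      Finsupp.single_eq_of_ne' (by decide : (1 : Fin 2) ≠ 0), add_zero] at h0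
    rw [Finsupp.add_apply, Finsupp.single_eq_same,
      Finsupp.single_eq_of_ne' (by decide : (0 : Fin 2) ≠ 1), zero_add] at h1
    have h2 : 2 + (p - 2) = p := by omega
    have k1 : 2 * c + c * (p - 2) = p * c := by
      calc 2 * c + c * (p - 2) = (2 + (p - 2)) * c := by ring
        _ = p * c := by rw [h2]
    have k2 : p * a + p * b + p * c = p * (p - 1) := by
      rw [show p * a + p * b + p * c = p * (a + b + c) by ring, hsum]
    have k3 : 2 * (p - 1) + (p - 2) * (p - 1) = p * (p - 1) := by
      calc 2 * (p - 1) + (p - 2) * (p - 1) = (2 + (p - 2)) * (p - 1) := by ring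
        _ = p * (p - 1) := by rw [h2]
    have he : e0 + e1 = 0 := by linarith
    obtain ⟨m, hm⟩ := hodd
    rcases Nat.lt_or_ge a 2 with ha | ha
    · interval_cases a
      · omega
      · omega
    · have h2p : p * 2 ≤ p * a := Nat.mul_le_mul_left p ha
      have hpm : 2 * (p - 1) + 2 = 2 * p := by omega
      linarith
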